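/- Let g be a Lorentzian symmetric bilinear form on a real 4-dimensional vector space V, v a timelike vector, and h the induced positive definite form h(x,y) = -λ_x λ_y g(v,v) + g(w_x,w_y). Then v is an eigenvector with negative eigenvalue (namely -1 after normalizing g(v,v) = -h(v,v)) of the h-self-adjoint operator A defined by h(Ax,y) = g(x,y); thus the two constructions of Theorem 3 (separation → metric and metric → separation) are mutually inverse up to scaling. -/

import Mathlib

lemma aux_cs (v0 v1 v2 v3 c0 c1 c2 c3 : ℝ)
    (h1 : -(v0*v0)+v1*v1+v2*v2+v3*v3 < 0)
    (h2 : -(c0*c0)+c1*c1+c2*c2+c3*c3 = 0)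
    (h3 : -(v0*c0)+v1*c1+v2*c2+v3*c3 = 0) :
    c0 = 0 ∧ c1 = 0 ∧ c2 = 0 ∧ c3 = 0 := by
  have hv0c0 : v0*c0 = v1*c1+v2*c2+v3*c3 := by linarith
  have hsq : (v0*c0)*(v0*c0) = (v1*c1+v2*c2+v3*c3)*(v1*c1+v2*c2+v3*c3) := by
    rw [hv0c0]
  have hsc : c1*c1+c2*c2+c3*c3 = c0*c0 := by linarith
  have cs : (v1*c1+v2*c2+v3*c3)*(v1*c1+v2*c2+v3*c3)
      ≤ (v1*v1+v2*v2+v3*v3)*(c1*c1+c2*c2+c3*c3) := by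
    nlinarith [sq_nonneg (v1*c2-v2*c1), sq_nonneg (v1*c3-v3*c1), sq_nonneg (v2*c3-v3*c2)]
  have key : c0*c0 ≤ 0 := by
    by_contra hc
    push_neg at hc
    have hp : 0 < (v0*v0 - (v1*v1+v2*v2+v3*v3)) * (c0*c0) :=
      mul_pos (by linarith) hc
    rw [hsc] at cs
    nlinarith [cs, hsq, hp]
  have hc0 : c0 = 0 := by
    have := mul_self_nonneg c0
    have : c0*c0 = 0 := le_antisymm key this
    exact mul_self_eq_zero.mp this
  have h1' : c1*c1 = 0 := by nlinarith [mul_self_nonneg c1, mul_self_nonneg c2, mul_self_nonneg c3]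
  have h2' : c2*c2 = 0 := by nlinarith [mul_self_nonneg c1, mul_self_nonneg c2, mul_self_nonneg c3]
  have h3' : c3*c3 = 0 := by nlinarith [mul_self_nonneg c1, mul_self_nonneg c2, mul_self_nonneg c3]
  exact ⟨hc0, mul_self_eq_zero.mp h1', mul_self_eq_zero.mp h2', mul_self_eq_zero.mp h3'⟩

lemma aux_expand {V : Type*} [AddCommGroup V] [Module ℝ V]
    (g : LinearMap.BilinForm ℝ V) (e : Module.Basis (Fin 4) ℝ V)
    (he : ∀ i j, g (e i) (e j) = if i = j then (if i = (0 : Fin 4) then -1 else 1) else 0)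
    (x y : V) :
    g x y = -(e.repr x 0 * e.repr y 0) + e.repr x 1 * e.repr y 1
      + e.repr x 2 * e.repr y 2 + e.repr x 3 * e.repr y 3 := by
  have hx := e.sum_repr x
  have hy := e.sum_repr y
  rw [Fin.sum_univ_four] at hx hy
  conv_lhs => rw [← hx, ← hy]
  simp only [map_add, map_smul, LinearMap.add_apply, LinearMap.smul_apply, smul_eq_mul, he]
  simp only [Fin.reduceEq, if_false, if_true, ite_true, ite_false, reduceIte]
  ring

/-- If `g` is Lorentzian, `v` is timelike, `c` is `g`-orthogonal to `v` and null, then `c = 0`. -/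
lemma aux_null_orth {V : Type*} [AddCommGroup V] [Module ℝ V]
    (g : LinearMap.BilinForm ℝ V)
    (hsig : ∃ e : Module.Basis (Fin 4) ℝ V, ∀ i j, g (e i) (e j) = if i = j then (if i = (0 : Fin 4) then -1 else 1) else 0)
    (v : V) (hv : g v v < 0) (c : V) (horth : g v c = 0) (hnull : g c c = 0) : c = 0 := by
  obtain ⟨e, he⟩ := hsig
  have hvv := aux_expand g e he v v
  have hcc := aux_expand g e he c c
  have hvc := aux_expand g e he v c
  rw [hvv] at hv
  rw [hcc] at hnull
  rw [hvc] at horth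
  obtain ⟨h0, h1, h2, h3⟩ := aux_cs (e.repr v 0) (e.repr v 1) (e.repr v 2) (e.repr v 3)
    (e.repr c 0) (e.repr c 1) (e.repr c 2) (e.repr c 3)
    (by linarith) (by linarith) (by linarith)
  have : e.repr c = 0 := by
    ext i
    fin_cases i <;> simpa using by assumption
  have := congrArg e.repr.symm this
  simpa using this

/-- v is an eigenvector with eigenvalue -1 of the operator A representing
g with respect to the induced metric h; the two constructions are mutually inverse. -/
theorem constructions_mutually_inverse
    {V : Type*} [AddCommGroup V] [Module ℝ V]
    (g : LinearMap.BilinForm ℝ V)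
    (hsymm : ∀ x y, g x y = g y x)
    (hsig : ∃ e : Module.Basis (Fin 4) ℝ V, ∀ i j, g (e i) (e j) = if i = j then (if i = (0 : Fin 4) then -1 else 1) else 0)
    (v : V) (hv : g v v < 0)
    (lam : V → ℝ) (wp : V → V)
    (hdec : ∀ x : V, x = lam x • v + wp x ∧ g v (wp x) = 0)
    (h : V → V → ℝ)
    (hdef : ∀ x y, h x y = -(lam x * lam y) * g v v + g (wp x) (wp y))
    (A : V →ₗ[ℝ] V)
    (hA : ∀ x y : V, h (A x) y = g x y) :
    A v = (-1 : ℝ) • v := by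
  have hgvv : g v v ≠ 0 := ne_of_lt hv
  -- general fact: g v y = lam y * g v v
  have glam : ∀ y : V, g v y = lam y * g v v := by
    intro y
    obtain ⟨hy1, hy2⟩ := hdec y
    calc g v y = g v (lam y • v + wp y) := by rw [← hy1]
      _ = lam y * g v v + g v (wp y) := by rw [map_add, map_smul]; simp [smul_eq_mul]
      _ = lam y * g v v := by rw [hy2, add_zero]
  -- lam v = 1, wp v = 0
  have hlamv : lam v = 1 := by
    have h0 := glam v
    have h1 : (lam v - 1) * g v v = 0 := by linear_combination -h0
    rcases mul_eq_zero.mp h1 with h' | h'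
    · linarith
    · exact absurd h' hgvv
  have hwpv : wp v = 0 := by
    have := (hdec v).1
    rw [hlamv, one_smul] at this
    linear_combination (norm := abel) -this
  -- lam (A v) = -1
  have hlamAv : lam (A v) = -1 := by
    have h1 : h (A v) v = g v v := hA v v
    rw [hdef, hlamv, hwpv, map_zero] at h1
    have h2 : -(lam (A v)) * g v v = 1 * g v v := by linear_combination h1
    have := mul_right_cancel₀ hgvv h2
    linarith
  -- g (wp (A v)) (wp y) = 0 for all y
  have horthall : ∀ y : V, g (wp (A v)) (wp y) = 0 := by
    intro y
    have h1 : h (A v) y = g v y := hA v y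
    rw [hdef, hlamAv, glam y] at h1
    nlinarith [h1]
  -- let c = wp (A v); show c = 0
  set c := wp (A v) with hc
  have horthv : g v c = 0 := (hdec (A v)).2
  have hlamc : lam c = 0 := by
    have := glam c
    rw [horthv] at this
    rcases mul_eq_zero.mp this.symm with h' | h'
    · exact h'
    · exact absurd h' hgvv
  have hwpc : wp c = c := by
    have := (hdec c).1
    rw [hlamc, zero_smul, zero_add] at this
    exact this.symm
  have hnull : g c c = 0 := by
    have := horthall c
    rwa [hwpc] at this
  have hczero : c = 0 := aux_null_orth g hsig v hv c horthv hnull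
  have := (hdec (A v)).1
  rw [hlamAv, ← hc, hczero, add_zero] at this
  exact this
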